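/- Let p ∈ ℝ, ψ ∈ ℝ, and let P be a real 2×2 matrix with ker P = span{ξ} for some nonzero ξ ∈ ℝ². Then: (i) if p ≠ 0: when ξ is a scalar multiple of (1,0)ᵀ or of (−ψ,2p)ᵀ, one has ker H_{P,ψ}(a) = span{ξ} for all a > 0; otherwise ker H_{P,ψ}(a) ≠ ker H_{P,ψ}(b) for any 0 < a < b < ∞. (ii) if p = 0 and ψ ≠ 0: when ξ is a scalar multiple of (1,0)ᵀ, one has ker H_{P,ψ}(a) = span{ξ} for all a > 0; otherwise ker H_{P,ψ}(a) ≠ ker H_{P,ψ}(b) for any 0 < a < b < ∞. (iii) if p = 0 and ψ = 0, then ker H_{P,ψ}(a) = span{ξ} for all a > 0. -/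

import Mathlib

open Matrix MeasureTheory Filter

noncomputable section

def matJ : Matrix (Fin 2) (Fin 2) ℝ := !![0, -1; 1, 0]

def Dpsi (p ψ a : ℝ) : Matrix (Fin 2) (Fin 2) ℝ :=
  if p = 0 then !![1, 0; ψ * Real.log a, 1]
  else !![1, 0; ψ / (2 * p), 1] * !![a ^ p, 0; 0, a ^ (-p)] * !![1, 0; -ψ / (2 * p), 1]

def HPpsi (p ψ : ℝ) (P : Matrix (Fin 2) (Fin 2) ℝ) (a : ℝ) : Matrix (Fin 2) (Fin 2) ℝ :=
  Dpsi p ψ a * P * (Dpsi p ψ a)ᵀ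

def SatRec (p : ℝ) (P : Matrix (Fin 2) (Fin 2) ℝ) (ψ : ℝ) (α β : ℕ → ℝ) : Prop :=
  α 0 = 1 ∧ β 0 = 0 ∧ ∀ n : ℕ,
    !![α (n + 1), β (n + 1)] =
      (-1 / (((n : ℝ) + 1) * (2 * p + (n : ℝ) + 1))) •
        (!![α n, β n] * (P * matJ * !![2 * p + (n : ℝ) + 1, 0; ψ, (n : ℝ) + 1]))

def genF (c : ℕ → ℝ) (z : ℂ) : ℂ := ∑' n : ℕ, (c n : ℂ) * z ^ n

def rowAB (p ψ : ℝ) (α β : ℕ → ℝ) (a : ℝ) (z : ℂ) : Matrix (Fin 1) (Fin 2) ℂ :=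
  !![((a ^ p : ℝ) : ℂ) * genF α ((a : ℂ) * z), ((a ^ p : ℝ) : ℂ) * genF β ((a : ℂ) * z)] *
    ((Dpsi p ψ a)⁻¹).map Complex.ofReal

namespace S9Aux

lemma ker_conj (M N P : Matrix (Fin 2) (Fin 2) ℝ) (ξ : Fin 2 → ℝ)
    (hMN : M * N = 1) (hNM : N * M = 1)
    (hker : LinearMap.ker P.mulVecLin = Submodule.span ℝ {ξ}) :
    LinearMap.ker (M * P * Mᵀ).mulVecLin = Submodule.span ℝ {Nᵀ.mulVec ξ} := by
  have hξker : P.mulVec ξ = 0 := by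
    have h1 : ξ ∈ LinearMap.ker P.mulVecLin := by
      rw [hker]; exact Submodule.mem_span_singleton_self ξ
    simpa using h1
  ext x
  simp only [LinearMap.mem_ker, Matrix.mulVecLin_apply, Submodule.mem_span_singleton]
  constructor
  · intro h
    have h1 : M.mulVec (P.mulVec (Mᵀ.mulVec x)) = 0 := by
      rw [Matrix.mulVec_mulVec, Matrix.mulVec_mulVec]; exact h
    have h2 : P.mulVec (Mᵀ.mulVec x) = 0 := by
      have := congrArg N.mulVec h1
      rwa [Matrix.mulVec_mulVec, hNM, Matrix.one_mulVec, Matrix.mulVec_zero] at this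
    have h3 : Mᵀ.mulVec x ∈ LinearMap.ker P.mulVecLin := by simpa using h2
    rw [hker] at h3
    obtain ⟨c, hc⟩ := Submodule.mem_span_singleton.mp h3
    refine ⟨c, ?_⟩
    have hx : Nᵀ.mulVec (Mᵀ.mulVec x) = x := by
      rw [Matrix.mulVec_mulVec, ← Matrix.transpose_mul, hMN, Matrix.transpose_one,
        Matrix.one_mulVec]
    rw [← hx, ← hc, Matrix.mulVec_smul]
  · rintro ⟨c, hc⟩
    rw [← hc, Matrix.mulVec_smul, Matrix.mulVec_mulVec]
    have : M * P * Mᵀ * Nᵀ = M * P := by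
      rw [Matrix.mul_assoc (M * P), ← Matrix.transpose_mul, hNM, Matrix.transpose_one,
        Matrix.mul_one]
    rw [this, ← Matrix.mulVec_mulVec, hξker, Matrix.mulVec_zero, smul_zero]

lemma mulVec_ne_zero (M N : Matrix (Fin 2) (Fin 2) ℝ) (ξ : Fin 2 → ℝ)
    (hNM : N * M = 1) (hξ : ξ ≠ 0) : Nᵀ.mulVec ξ ≠ 0 := by
  intro h
  apply hξ
  have h1 : Mᵀ.mulVec (Nᵀ.mulVec ξ) = ξ := by
    rw [Matrix.mulVec_mulVec, ← Matrix.transpose_mul, hNM, Matrix.transpose_one,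
      Matrix.one_mulVec]
  rw [h, Matrix.mulVec_zero] at h1
  exact h1.symm

lemma mulVec_form (α β γ δ : ℝ) (ξ : Fin 2 → ℝ) :
    (!![α, β; γ, δ])ᵀ.mulVec ξ = ![α * ξ 0 + γ * ξ 1, β * ξ 0 + δ * ξ 1] := by
  funext i
  fin_cases i <;>
    simp [Matrix.mulVec, dotProduct, Fin.sum_univ_two]

/-- kernel description for p ≠ 0 -/
lemma kerH (p ψ : ℝ) (hp : p ≠ 0) (P : Matrix (Fin 2) (Fin 2) ℝ) (ξ : Fin 2 → ℝ)
    (hξ : ξ ≠ 0) (hker : LinearMap.ker P.mulVecLin = Submodule.span ℝ {ξ})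
    (a : ℝ) (ha : 0 < a) :
    LinearMap.ker (HPpsi p ψ P a).mulVecLin =
      Submodule.span ℝ {![(a ^ p)⁻¹ * ξ 0 + (-(ψ / (2 * p)) * (a ^ p - (a ^ p)⁻¹)) * ξ 1,
        0 * ξ 0 + a ^ p * ξ 1]} ∧
    (![(a ^ p)⁻¹ * ξ 0 + (-(ψ / (2 * p)) * (a ^ p - (a ^ p)⁻¹)) * ξ 1,
        0 * ξ 0 + a ^ p * ξ 1] : Fin 2 → ℝ) ≠ 0 := by
  set s := a ^ p with hs0
  have hs : 0 < s := Real.rpow_pos_of_pos ha p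
  set M : Matrix (Fin 2) (Fin 2) ℝ := !![s, 0; ψ / (2 * p) * (s - s⁻¹), s⁻¹] with hM
  set N : Matrix (Fin 2) (Fin 2) ℝ := !![s⁻¹, 0; -(ψ / (2 * p)) * (s - s⁻¹), s] with hN
  have hD : Dpsi p ψ a = M := by
    rw [Dpsi, if_neg hp, Real.rpow_neg ha.le, hM]
    ext i j
    fin_cases i <;> fin_cases j <;>
      simp [Matrix.mul_apply, Fin.sum_univ_two] <;> ring
  have hMN : M * N = 1 := by
    ext i j
    fin_cases i <;> fin_cases j <;>
      simp [hM, hN, Matrix.mul_apply, Fin.sum_univ_two, Matrix.one_apply] <;>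
      field_simp <;> ring
  have hNM : N * M = 1 := by
    ext i j
    fin_cases i <;> fin_cases j <;>
      simp [hM, hN, Matrix.mul_apply, Fin.sum_univ_two, Matrix.one_apply] <;>
      field_simp <;> ring
  have hH : HPpsi p ψ P a = M * P * Mᵀ := by rw [HPpsi, hD]
  have hv : Nᵀ.mulVec ξ = ![s⁻¹ * ξ 0 + (-(ψ / (2 * p)) * (s - s⁻¹)) * ξ 1,
      0 * ξ 0 + s * ξ 1] := by
    rw [hN, mulVec_form]
  constructor
  · rw [hH, ker_conj M N P ξ hMN hNM hker, hv]
  · rw [← hv]; exact mulVec_ne_zero M N ξ hNM hξ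

/-- kernel description for p = 0 -/
lemma kerH0 (ψ : ℝ) (P : Matrix (Fin 2) (Fin 2) ℝ) (ξ : Fin 2 → ℝ)
    (hξ : ξ ≠ 0) (hker : LinearMap.ker P.mulVecLin = Submodule.span ℝ {ξ})
    (a : ℝ) :
    LinearMap.ker (HPpsi 0 ψ P a).mulVecLin =
      Submodule.span ℝ {![1 * ξ 0 + (-(ψ * Real.log a)) * ξ 1, 0 * ξ 0 + 1 * ξ 1]} ∧
    (![1 * ξ 0 + (-(ψ * Real.log a)) * ξ 1, 0 * ξ 0 + 1 * ξ 1] : Fin 2 → ℝ) ≠ 0 := by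
  set M : Matrix (Fin 2) (Fin 2) ℝ := !![1, 0; ψ * Real.log a, 1] with hM
  set N : Matrix (Fin 2) (Fin 2) ℝ := !![1, 0; -(ψ * Real.log a), 1] with hN
  have hD : Dpsi 0 ψ a = M := by rw [Dpsi, if_pos rfl]
  have hMN : M * N = 1 := by
    ext i j
    fin_cases i <;> fin_cases j <;>
      simp [hM, hN, Matrix.mul_apply, Fin.sum_univ_two, Matrix.one_apply]
  have hNM : N * M = 1 := by
    ext i j
    fin_cases i <;> fin_cases j <;>
      simp [hM, hN, Matrix.mul_apply, Fin.sum_univ_two, Matrix.one_apply]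
  have hH : HPpsi 0 ψ P a = M * P * Mᵀ := by rw [HPpsi, hD]
  have hv : Nᵀ.mulVec ξ = ![1 * ξ 0 + (-(ψ * Real.log a)) * ξ 1, 0 * ξ 0 + 1 * ξ 1] := by
    rw [hN, mulVec_form]
  constructor
  · rw [hH, ker_conj M N P ξ hMN hNM hker, hv]
  · rw [← hv]; exact mulVec_ne_zero M N ξ hNM hξ

end S9Aux

namespace S9Aux

lemma cross_zero_of_span_eq {u v : Fin 2 → ℝ}
    (h : Submodule.span ℝ {u} = Submodule.span ℝ {v}) :
    u 0 * v 1 - u 1 * v 0 = 0 := by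
  have hu' : u ∈ Submodule.span ℝ {v} := h ▸ Submodule.mem_span_singleton_self u
  obtain ⟨c, hc⟩ := Submodule.mem_span_singleton.mp hu'
  rw [← hc]; simp; ring

lemma span_eq_of_cross_zero {u v : Fin 2 → ℝ} (hu : u ≠ 0) (hv : v ≠ 0)
    (h : u 0 * v 1 - u 1 * v 0 = 0) :
    Submodule.span ℝ {u} = Submodule.span ℝ {v} := by
  obtain ⟨c, hc, huv⟩ : ∃ c : ℝ, c ≠ 0 ∧ u = c • v := by
    have hv01 : v 0 ≠ 0 ∨ v 1 ≠ 0 := by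
      by_contra hcon
      push_neg at hcon
      exact hv (by funext i; fin_cases i <;> simp [hcon.1, hcon.2])
    rcases hv01 with h0 | h1
    · refine ⟨u 0 / v 0, ?_, ?_⟩
      · intro hc
        have hu0 : u 0 = 0 := by
          field_simp at hc; simpa using hc
        have hu1 : u 1 = 0 := by
          have h2 : u 1 * v 0 = 0 := by rw [← sub_eq_zero] at h ⊢; simpa [hu0] using h
          rcases mul_eq_zero.mp h2 with h' | h'
          · exact h'
          · exact absurd h' h0
        exact hu (by funext i; fin_cases i <;> simp [hu0, hu1])
      · funext i; fin_cases i
        · simp; field_simp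
        · simp; field_simp; linear_combination -h
    · refine ⟨u 1 / v 1, ?_, ?_⟩
      · intro hc
        have hu1 : u 1 = 0 := by field_simp at hc; simpa using hc
        have hu0 : u 0 = 0 := by
          have h2 : u 0 * v 1 = 0 := by simpa [hu1] using h
          rcases mul_eq_zero.mp h2 with h' | h'
          · exact h'
          · exact absurd h' h1
        exact hu (by funext i; fin_cases i <;> simp [hu0, hu1])
      · funext i; fin_cases i
        · simp; field_simp; linear_combination h
        · simp; field_simp
  rw [huv]
  exact Submodule.span_singleton_smul_eq (IsUnit.mk0 c hc) v

end S9Aux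

open S9Aux

/-- behaviour of the kernel of H_{P,ψ}(a) when ker P = span{ξ}. -/
theorem statement9 (p ψ : ℝ) (P : Matrix (Fin 2) (Fin 2) ℝ) (ξ : Fin 2 → ℝ)
    (hξ : ξ ≠ 0)
    (hker : LinearMap.ker P.mulVecLin = Submodule.span ℝ {ξ}) :
    (p ≠ 0 →
      (((∃ c : ℝ, ξ = c • ![1, 0]) ∨ (∃ c : ℝ, ξ = c • ![-ψ, 2 * p])) →
        ∀ a : ℝ, 0 < a →
          LinearMap.ker (HPpsi p ψ P a).mulVecLin = Submodule.span ℝ {ξ}) ∧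
      (¬ ((∃ c : ℝ, ξ = c • ![1, 0]) ∨ (∃ c : ℝ, ξ = c • ![-ψ, 2 * p])) →
        ∀ a b : ℝ, 0 < a → a < b →
          LinearMap.ker (HPpsi p ψ P a).mulVecLin ≠ LinearMap.ker (HPpsi p ψ P b).mulVecLin)) ∧
    (p = 0 → ψ ≠ 0 →
      ((∃ c : ℝ, ξ = c • ![1, 0]) →
        ∀ a : ℝ, 0 < a →
          LinearMap.ker (HPpsi p ψ P a).mulVecLin = Submodule.span ℝ {ξ}) ∧
      (¬ (∃ c : ℝ, ξ = c • ![1, 0]) →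
        ∀ a b : ℝ, 0 < a → a < b →
          LinearMap.ker (HPpsi p ψ P a).mulVecLin ≠ LinearMap.ker (HPpsi p ψ P b).mulVecLin)) ∧
    (p = 0 → ψ = 0 →
      ∀ a : ℝ, 0 < a →
        LinearMap.ker (HPpsi p ψ P a).mulVecLin = Submodule.span ℝ {ξ}) := by
  refine ⟨fun hp => ⟨?_, ?_⟩, fun hp hψ => ?_, fun hp hψ a ha => ?_⟩
  · -- p ≠ 0, parallel case
    intro hdisj a ha
    obtain ⟨hk, hnz⟩ := kerH p ψ hp P ξ hξ hker a ha
    rw [hk]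
    apply span_eq_of_cross_zero hnz hξ
    have hzero : ξ 1 * (2 * p * ξ 0 + ψ * ξ 1) = 0 := by
      rcases hdisj with ⟨c, hc⟩ | ⟨c, hc⟩
      · have h1 : ξ 1 = 0 := by rw [hc]; simp
        rw [h1]; ring
      · have h0 : ξ 0 = c * (-ψ) := by rw [hc]; simp
        have h1 : ξ 1 = c * (2 * p) := by rw [hc]; simp
        rw [h0, h1]; ring
    have hs : (0:ℝ) < a ^ p := Real.rpow_pos_of_pos ha p
    simp only [Matrix.cons_val_zero, Matrix.cons_val_one, Matrix.head_cons]
    have hexpr : ((a ^ p)⁻¹ * ξ 0 + (-(ψ / (2 * p)) * (a ^ p - (a ^ p)⁻¹)) * ξ 1) * ξ 1 -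
        (0 * ξ 0 + a ^ p * ξ 1) * ξ 0
        = (1 - (a ^ p) ^ 2) * (ξ 1 * (2 * p * ξ 0 + ψ * ξ 1)) / (2 * p * a ^ p) := by
      field_simp
      ring
    rw [hexpr, hzero, mul_zero, zero_div]
  · -- p ≠ 0, non-parallel case
    intro hnot a b ha hab heq
    rw [not_or] at hnot
    obtain ⟨hnA, hnB⟩ := hnot
    push_neg at hnA hnB
    have hy : ξ 1 ≠ 0 := by
      intro h1
      exact hnA (ξ 0) (by funext i; fin_cases i <;> simp [h1])
    have hl : 2 * p * ξ 0 + ψ * ξ 1 ≠ 0 := by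
      intro h
      apply hnB (ξ 1 / (2 * p))
      funext i; fin_cases i
      · show ξ 0 = ξ 1 / (2 * p) * (-ψ)
        field_simp
        linarith
      · show ξ 1 = ξ 1 / (2 * p) * (2 * p)
        field_simp
    have hb : 0 < b := ha.trans hab
    obtain ⟨hka, _⟩ := kerH p ψ hp P ξ hξ hker a ha
    obtain ⟨hkb, _⟩ := kerH p ψ hp P ξ hξ hker b hb
    rw [hka, hkb] at heq
    have hcross := cross_zero_of_span_eq heq
    simp only [Matrix.cons_val_zero, Matrix.cons_val_one, Matrix.head_cons] at hcross
    have hs : (0:ℝ) < a ^ p := Real.rpow_pos_of_pos ha p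
    have hr : (0:ℝ) < b ^ p := Real.rpow_pos_of_pos hb p
    have hsr : a ^ p ≠ b ^ p := fun h =>
      (ne_of_lt hab) ((Real.rpow_left_inj ha.le hb.le hp).mp h)
    have h2 : (b ^ p) ^ 2 - (a ^ p) ^ 2 ≠ 0 := by
      have hfac : (b ^ p) ^ 2 - (a ^ p) ^ 2 = (b ^ p - a ^ p) * (b ^ p + a ^ p) := by ring
      rw [hfac]
      exact mul_ne_zero (sub_ne_zero.mpr (Ne.symm hsr)) (by positivity)
    have hexpr : ((a ^ p)⁻¹ * ξ 0 + (-(ψ / (2 * p)) * (a ^ p - (a ^ p)⁻¹)) * ξ 1) *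
          (0 * ξ 0 + b ^ p * ξ 1) -
        (0 * ξ 0 + a ^ p * ξ 1) *
          ((b ^ p)⁻¹ * ξ 0 + (-(ψ / (2 * p)) * (b ^ p - (b ^ p)⁻¹)) * ξ 1)
        = ξ 1 * (2 * p * ξ 0 + ψ * ξ 1) * ((b ^ p) ^ 2 - (a ^ p) ^ 2) /
            (2 * p * a ^ p * b ^ p) := by
      field_simp
      ring
    rw [hexpr] at hcross
    exact (div_ne_zero (mul_ne_zero (mul_ne_zero hy hl) h2)
      (mul_ne_zero (mul_ne_zero (mul_ne_zero two_ne_zero hp) hs.ne') hr.ne')) hcross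
  · -- p = 0, ψ ≠ 0
    subst hp
    constructor
    · intro hex a ha
      obtain ⟨hk, hnz⟩ := kerH0 ψ P ξ hξ hker a
      rw [hk]
      apply span_eq_of_cross_zero hnz hξ
      obtain ⟨c, hc⟩ := hex
      have h1 : ξ 1 = 0 := by rw [hc]; simp
      simp only [Matrix.cons_val_zero, Matrix.cons_val_one, Matrix.head_cons]
      rw [h1]; ring
    · intro hnot a b ha hab heq
      push_neg at hnot
      have hy : ξ 1 ≠ 0 := by
        intro h1
        exact hnot (ξ 0) (by funext i; fin_cases i <;> simp [h1])
      obtain ⟨hka, _⟩ := kerH0 ψ P ξ hξ hker a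
      obtain ⟨hkb, _⟩ := kerH0 ψ P ξ hξ hker b
      rw [hka, hkb] at heq
      have hcross := cross_zero_of_span_eq heq
      simp only [Matrix.cons_val_zero, Matrix.cons_val_one, Matrix.head_cons] at hcross
      have hexpr : (1 * ξ 0 + -(ψ * Real.log a) * ξ 1) * (0 * ξ 0 + 1 * ξ 1) -
          (0 * ξ 0 + 1 * ξ 1) * (1 * ξ 0 + -(ψ * Real.log b) * ξ 1)
          = ψ * ξ 1 ^ 2 * (Real.log b - Real.log a) := by ring
      rw [hexpr] at hcross
      have hlog : Real.log a < Real.log b := Real.log_lt_log ha hab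
      exact (mul_ne_zero (mul_ne_zero hψ (pow_ne_zero 2 hy))
        (sub_ne_zero.mpr (ne_of_gt hlog))) hcross
  · -- p = 0, ψ = 0
    subst hp; subst hψ
    obtain ⟨hk, _⟩ := kerH0 0 P ξ hξ hker a
    rw [hk]
    have hv : ![1 * ξ 0 + (-(0 * Real.log a)) * ξ 1, 0 * ξ 0 + 1 * ξ 1] = ξ := by
      funext i; fin_cases i <;> simp
    rw [hv]
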